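/- Unbiasedness of inverse probability weighting: Let X be a random variable taking values in a finite type, T a {0,1}-valued treatment variable, and Y(0), Y(1) integrable real-valued potential outcomes, all on a common probability space, with observed outcome Y := T·Y(1) + (1 − T)·Y(0). Assume that for every x with P(X = x) > 0 the pair (Y(0), Y(1)) is conditionally independent of T given X = x (ignorability) and 0 < P(T = 1 ∣ X = x) < 1 (overlap). Let s(x) := P(T = 1 ∣ X = x). Then E[ T·Y / s(X) ] = E[ Y(1) ]. -/

import Mathlib

open MeasureTheory ProbabilityTheory
open scoped ENNReal

lemma cond_setIntegral' {Ω : Type*} [MeasurableSpace Ω] (μ : Measure Ω) [IsFiniteMeasure μ]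
    (A : Set Ω) (hA0 : μ A ≠ 0) (g : Ω → ℝ) :
    ∫ ω in A, g ω ∂μ = (μ A).toReal * ∫ ω, g ω ∂(μ[|A]) := by
  have hne : (μ A).toReal ≠ 0 := ENNReal.toReal_ne_zero.mpr ⟨hA0, measure_ne_top μ A⟩
  rw [ProbabilityTheory.cond, integral_smul_measure, ENNReal.toReal_inv, smul_eq_mul,
    mul_inv_cancel_left₀ hne]

/-- Unbiasedness of inverse probability weighting: with observed outcome
`Y := T·Y(1) + (1−T)·Y(0)`, conditional ignorability and overlap for every `x` with
`P(X = x) > 0`, and propensity score `s(x) := P(T = 1 ∣ X = x)`, one has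
`E[T·Y / s(X)] = E[Y(1)]`. -/
theorem ipw_unbiasedness
    {Ω : Type*} [MeasurableSpace Ω] (μ : Measure Ω) [IsProbabilityMeasure μ]
    {XT : Type*} [Fintype XT] [MeasurableSpace XT] [MeasurableSingletonClass XT]
    (X : Ω → XT) (T : Ω → ℝ) (Y0 Y1 : Ω → ℝ)
    (hX : Measurable X) (hT : Measurable T) (hY0 : Measurable Y0) (hY1 : Measurable Y1)
    (hT01 : ∀ ω, T ω = 0 ∨ T ω = 1)
    (hY0int : Integrable Y0 μ) (hY1int : Integrable Y1 μ)
    (Y : Ω → ℝ) (hY : ∀ ω, Y ω = T ω * Y1 ω + (1 - T ω) * Y0 ω)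
    -- conditional ignorability: (Y(0), Y(1)) ⫫ T given X = x, for every x of positive probability
    (hignor : ∀ x : XT, μ {ω | X ω = x} ≠ 0 →
      IndepFun (fun ω => (Y0 ω, Y1 ω)) T (μ[|{ω | X ω = x}]))
    -- overlap
    (hoverlap : ∀ x : XT, μ {ω | X ω = x} ≠ 0 →
      0 < μ[|{ω | X ω = x}] {ω | T ω = 1} ∧ μ[|{ω | X ω = x}] {ω | T ω = 1} < 1)
    -- the propensity score
    (s : XT → ℝ) (hs : ∀ x : XT, s x = (μ[|{ω | X ω = x}] {ω | T ω = 1}).toReal) :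
    ∫ ω, T ω * Y ω / s (X ω) ∂μ = ∫ ω, Y1 ω ∂μ := by
  classical
  -- T*Y = T*Y1
  have hTY : ∀ ω, T ω * Y ω = T ω * Y1 ω := by
    intro ω; rcases hT01 ω with h | h <;> rw [hY, h] <;> ring
  set f : Ω → ℝ := fun ω => T ω * Y1 ω / s (X ω) with hfdef
  have hf_eq : (fun ω => T ω * Y ω / s (X ω)) = f := by
    funext ω; simp only [hfdef, hTY ω]
  -- fibers
  set A : XT → Set Ω := fun x => {ω | X ω = x} with hAdef
  have hAmeas : ∀ x, MeasurableSet (A x) := fun x => hX (measurableSet_singleton x)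
  have hAdisj : Pairwise (Function.onFun Disjoint A) := by
    intro x y hxy
    simp only [Function.onFun, Set.disjoint_left]
    rintro ω (h1 : X ω = x) (h2 : X ω = y)
    exact hxy (h1 ▸ h2 ▸ rfl)
  have hAunion : (⋃ x, A x) = Set.univ := by
    ext ω; simp [hAdef]
  -- boundedness of the weight
  have hTmeas1 : MeasurableSet {ω | T ω = 1} := hT (measurableSet_singleton 1)
  -- integrability of f
  have hfint : Integrable f μ := by
    have hw : ∀ ω, ‖T ω / s (X ω)‖ ≤ ∑ x : XT, ‖(s x)⁻¹‖ := by
      intro ω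
      have hmem : ‖(s (X ω))⁻¹‖ ≤ ∑ x : XT, ‖(s x)⁻¹‖ :=
        Finset.single_le_sum (f := fun x : XT => ‖(s x)⁻¹‖)
          (fun x _ => norm_nonneg _) (Finset.mem_univ (X ω))
      rcases hT01 ω with h | h
      · simp only [h, zero_div, norm_zero]
        exact le_trans (norm_nonneg _) hmem
      · simpa [h, one_div] using hmem
    have : Integrable (fun ω => (T ω / s (X ω)) * Y1 ω) μ := by
      apply hY1int.bdd_mul
      · exact (hT.div ((measurable_of_countable s).comp hX)).aestronglyMeasurable
      · exact Filter.Eventually.of_forall hw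
    convert this using 2 with ω
    simp only [hfdef]; ring
  -- key fiberwise identity
  have key : ∀ x : XT, ∫ ω in A x, f ω ∂μ = ∫ ω in A x, Y1 ω ∂μ := by
    intro x
    by_cases hx : μ (A x) = 0
    · have h0 : μ.restrict (A x) = 0 := Measure.restrict_eq_zero.mpr hx
      simp only [h0, integral_zero_measure]
    · have hcond : IsProbabilityMeasure (μ[|A x]) := cond_isProbabilityMeasure hx
      -- on A x, f ω = T ω * Y1 ω / s x
      have hfx : ∀ ω ∈ A x, f ω = T ω * Y1 ω / s x := by
        intro ω hω; simp only [hfdef, show X ω = x from hω]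
      rw [setIntegral_congr_fun (hAmeas x) hfx,
        cond_setIntegral' μ (A x) hx, cond_setIntegral' μ (A x) hx]
      congr 1
      -- now work under the conditional measure
      have hind : IndepFun Y1 T (μ[|A x]) := by
        have := (hignor x hx).comp (φ := Prod.snd) (ψ := id) measurable_snd measurable_id
        exact this
      have hET : ∫ ω, T ω ∂(μ[|A x]) = s x := by
        have hTind : T = Set.indicator {ω | T ω = 1} (1 : Ω → ℝ) := by
          funext ω
          rcases hT01 ω with h | h
          · simp [Set.indicator, h]
          · simp [Set.indicator, h]
        rw [hs x]
        conv_lhs => rw [hTind]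
        rw [integral_indicator_one hTmeas1]
        rfl
      have hsx : s x ≠ 0 := by
        rw [hs x]
        exact (ENNReal.toReal_pos (hoverlap x hx).1.ne' (measure_ne_top _ _)).ne'
      have hmul : ∫ ω, T ω * Y1 ω ∂(μ[|A x]) = (∫ ω, T ω ∂(μ[|A x])) * ∫ ω, Y1 ω ∂(μ[|A x]) :=
        hind.symm.integral_mul_eq_mul_integral hT.aestronglyMeasurable hY1.aestronglyMeasurable
      rw [integral_div, hmul, hET, mul_div_cancel_left₀ _ hsx]
  -- sum over fibers
  have decomp : ∀ (g : Ω → ℝ), Integrable g μ → ∫ ω, g ω ∂μ = ∑ x : XT, ∫ ω in A x, g ω ∂μ := by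
    intro g hg
    rw [← setIntegral_univ, ← hAunion,
      integral_iUnion_fintype hAmeas hAdisj (fun x => hg.integrableOn)]
  rw [hf_eq, decomp f hfint, decomp Y1 hY1int]
  exact Finset.sum_congr rfl fun x _ => key x
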